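/- Let B(R,S) be a bistructure. The intersection graph of B — the simple graph whose vertices are the loops of B, with an edge between two distinct loops exactly when they have nonempty intersection — is connected; equivalently, the loop nerve K(B) is connected (H_0(K(B);ℤ) ≅ ℤ). -/

import Mathlib

/-- An arc `(i,j)` in a diagram. -/
abbrev Arc : Type := ℕ × ℕ

/-- Two arcs cross iff `p.1 < q.1 < p.2 < q.2` or `q.1 < p.1 < q.2 < p.2`. -/
def Arc.crosses (p q : Arc) : Prop :=
  (p.1 < q.1 ∧ q.1 < p.2 ∧ p.2 < q.2) ∨ (q.1 < p.1 ∧ p.1 < q.2 ∧ q.2 < p.2)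

/-- Nesting order: `Arc.nested q p` means `q ≺ p`, i.e. `p.1 < q.1 < q.2 < p.2`. -/
def Arc.nested (q p : Arc) : Prop := p.1 < q.1 ∧ q.1 < q.2 ∧ q.2 < p.2

/-- An RNA secondary structure on `{1,…,n}` with rainbow arc `(0, n+1)`. -/
structure SecStr (n : ℕ) : Type where
  arcs : Finset Arc
  lt_of_mem : ∀ p ∈ arcs, p.1 < p.2
  le_of_mem : ∀ p ∈ arcs, p.2 ≤ n + 1
  rainbow_mem : (0, n + 1) ∈ arcs
  matching : ∀ p ∈ arcs, ∀ q ∈ arcs, ∀ v : ℕ, 1 ≤ v → v ≤ n →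
    (v = p.1 ∨ v = p.2) → (v = q.1 ∨ v = q.2) → p = q
  noncrossing : ∀ p ∈ arcs, ∀ q ∈ arcs, ¬ Arc.crosses p q

namespace SecStr

variable {n : ℕ}

/-- The loop of an arc `p` of `R`. -/
def loop (R : SecStr n) (p : Arc) : Set ℕ :=
  {v | p.1 ≤ v ∧ v ≤ p.2 ∧ ¬ ∃ q ∈ R.arcs, Arc.nested q p ∧ q.1 < v ∧ v < q.2}

/-- A loop of `R` is the loop of one of its arcs. -/
def IsLoop (R : SecStr n) (L : Set ℕ) : Prop := ∃ p ∈ R.arcs, L = R.loop p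

end SecStr
/-- A label for a loop of a bistructure: `true` tags `R`-loops, `false` tags `S`-loops,
together with the maximal arc of the loop. -/
abbrev LoopLabel : Type := Bool × Arc

/-- A bistructure `B(R,S)`: two secondary structures on the same vertex set. -/
structure Bistructure (n : ℕ) : Type where
  R : SecStr n
  S : SecStr n

namespace Bistructure

variable {n : ℕ}

/-- The loop set of a bistructure: the disjoint union of the `R`-loops and `S`-loops,
encoded as tagged arcs. -/
def labels (B : Bistructure n) : Finset LoopLabel :=
  B.R.arcs.image (fun p => (true, p)) ∪ B.S.arcs.image (fun p => (false, p))

/-- The vertex set of the loop with label `x`. -/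
def loopSet (B : Bistructure n) (x : LoopLabel) : Set ℕ :=
  if x.1 then B.R.loop x.2 else B.S.loop x.2

/-- Two loops intersect. -/
def intersects (B : Bistructure n) (a b : LoopLabel) : Prop :=
  (B.loopSet a ∩ B.loopSet b).Nonempty

end Bistructure

/-- The intersection graph of a bistructure: vertices are the loops of `B`, with an edge
between two distinct loops exactly when they have nonempty intersection. -/
def Bistructure.interGraph {n : ℕ} (B : Bistructure n) :
    SimpleGraph {x : LoopLabel // x ∈ B.labels} where
  Adj a b := a ≠ b ∧ (B.loopSet ↑a ∩ B.loopSet ↑b).Nonempty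
  symm := by
    constructor
    rintro a b ⟨hab, v, hv1, hv2⟩
    exact ⟨hab.symm, v, hv2, hv1⟩
  loopless := by
    constructor
    rintro a ⟨h, -⟩
    exact h rfl

/-- the intersection graph of a bistructure is connected (equivalently, the
loop nerve is connected, i.e. `H₀(K(B);ℤ) ≅ ℤ`). -/
lemma SecStr.fst_mem_loop {n : ℕ} (R : SecStr n) (p : Arc) (hp : p ∈ R.arcs) :
    p.1 ∈ R.loop p := by
  refine ⟨le_refl _, le_of_lt (R.lt_of_mem p hp), ?_⟩
  rintro ⟨q, hq, hnest, h1, h2⟩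
  have := hnest.1
  omega

lemma exists_loop_pair {n : ℕ} (B : Bistructure n) (v : ℕ) (hv : v ≤ n) :
    ∃ p ∈ B.R.arcs, v ∈ B.R.loop p ∧ v + 1 ∈ B.R.loop p := by
  classical
  set T := B.R.arcs.filter (fun p => p.1 ≤ v ∧ v + 1 ≤ p.2) with hT
  have hne : T.Nonempty := by
    refine ⟨(0, n + 1), ?_⟩
    simp only [hT, Finset.mem_filter]
    exact ⟨B.R.rainbow_mem, by omega, by omega⟩
  obtain ⟨p, hpT, hmin⟩ := T.exists_min_image (fun p => p.2 - p.1) hne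
  simp only [hT, Finset.mem_filter] at hpT
  obtain ⟨hpa, hp1, hp2⟩ := hpT
  have contra : ∀ q ∈ B.R.arcs, Arc.nested q p → q.1 ≤ v → v + 1 ≤ q.2 → False := by
    intro q hq hnest hq1 hq2
    have hqT : q ∈ T := by
      simp only [hT, Finset.mem_filter]
      exact ⟨hq, hq1, hq2⟩
    have := hmin q hqT
    obtain ⟨h1, h2, h3⟩ := hnest
    omega
  refine ⟨p, hpa, ⟨hp1, by omega, ?_⟩, ⟨by omega, hp2, ?_⟩⟩
  · rintro ⟨q, hq, hnest, h1, h2⟩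
    exact contra q hq hnest (by omega) (by omega)
  · rintro ⟨q, hq, hnest, h1, h2⟩
    exact contra q hq hnest (by omega) (by omega)

theorem stmt4 (n : ℕ) (B : Bistructure n) : B.interGraph.Connected := by
  classical
  have hroot : ((true, ((0 : ℕ), n + 1)) : LoopLabel) ∈ B.labels := by
    simp only [Bistructure.labels, Finset.mem_union, Finset.mem_image]
    exact Or.inl ⟨_, B.R.rainbow_mem, rfl⟩
  set root : {x : LoopLabel // x ∈ B.labels} := ⟨(true, (0, n + 1)), hroot⟩ with hrootdef
  have step : ∀ (a b : {x : LoopLabel // x ∈ B.labels}) (v : ℕ),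
      v ∈ B.loopSet a → v ∈ B.loopSet b → B.interGraph.Reachable a b := by
    intro a b v hva hvb
    by_cases hab : a = b
    · exact hab ▸ SimpleGraph.Reachable.refl a
    · exact SimpleGraph.Adj.reachable ⟨hab, v, hva, hvb⟩
  have hroot0 : (0 : ℕ) ∈ B.loopSet root := by
    show (0 : ℕ) ∈ B.loopSet (true, (0, n + 1))
    simpa [Bistructure.loopSet] using B.R.fst_mem_loop (0, n + 1) B.R.rainbow_mem
  have main : ∀ v : ℕ, v ≤ n + 1 → ∀ a : {x : LoopLabel // x ∈ B.labels},
      v ∈ B.loopSet a → B.interGraph.Reachable root a := by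
    intro v
    induction v with
    | zero => intro _ a ha; exact step root a 0 hroot0 ha
    | succ v ih =>
      intro hv a ha
      obtain ⟨p, hp, hvp, hvp1⟩ := exists_loop_pair B v (by omega)
      have hmem : ((true, p) : LoopLabel) ∈ B.labels := by
        simp only [Bistructure.labels, Finset.mem_union, Finset.mem_image]
        exact Or.inl ⟨p, hp, rfl⟩
      set c : {x : LoopLabel // x ∈ B.labels} := ⟨(true, p), hmem⟩
      have hc1 : v ∈ B.loopSet c := by show v ∈ B.loopSet ((true, p) : LoopLabel); simpa [Bistructure.loopSet] using hvp
      have hc2 : v + 1 ∈ B.loopSet c := by show v + 1 ∈ B.loopSet ((true, p) : LoopLabel); simpa [Bistructure.loopSet] using hvp1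
      exact (ih (by omega) c hc1).trans (step c a (v + 1) hc2 ha)
  have exv : ∀ a : {x : LoopLabel // x ∈ B.labels},
      ∃ v ≤ n + 1, v ∈ B.loopSet a := by
    rintro ⟨x, hb⟩
    simp only [Bistructure.labels, Finset.mem_union, Finset.mem_image] at hb
    rcases hb with ⟨q, hq, rfl⟩ | ⟨q, hq, rfl⟩
    · refine ⟨q.1, ?_, ?_⟩
      · have := B.R.lt_of_mem q hq; have := B.R.le_of_mem q hq; omega
      · simpa [Bistructure.loopSet] using B.R.fst_mem_loop q hq
    · refine ⟨q.1, ?_, ?_⟩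
      · have := B.S.lt_of_mem q hq; have := B.S.le_of_mem q hq; omega
      · simpa [Bistructure.loopSet] using B.S.fst_mem_loop q hq
  have : Nonempty {x : LoopLabel // x ∈ B.labels} := ⟨root⟩
  refine ⟨fun a b => ?_⟩
  obtain ⟨va, hva, hva'⟩ := exv a
  obtain ⟨vb, hvb, hvb'⟩ := exv b
  exact (main va hva a hva').symm.trans (main vb hvb b hvb')
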